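/- Let (x_i, f_i) be a Schauder frame for a Banach space X such that (f_i, x_i) is a Schauder frame for X* (i.e., the frame is shrinking). Then for each f ∈ X*, lim_{m,n→∞} ‖f ∘ P_{[m,n]}‖ = 0, where P_{[m,n]}x = ∑_{i=m}^n f_i(x) x_i. -/
import Mathlib


open Filter Finset

/-- for a shrinking Schauder frame, `‖f ∘ P_{[m,n]}‖ → 0` as `m, n → ∞`. -/
theorem stmt_2 (X : Type*) [NormedAddCommGroup X] [NormedSpace ℝ X] [CompleteSpace X]
    (x : ℕ → X) (f : ℕ → X →L[ℝ] ℝ)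
    (hframe : ∀ v : X, Tendsto (fun n => ∑ i ∈ Finset.range n, f i v • x i) atTop (nhds v))
    (hshrink : ∀ g : X →L[ℝ] ℝ,
      Tendsto (fun n => ∑ i ∈ Finset.range n, g (x i) • f i) atTop (nhds g)) :
    ∀ g : X →L[ℝ] ℝ, ∀ ε > 0, ∃ M : ℕ, ∀ m n : ℕ, M ≤ m → m ≤ n →
      ‖g.comp (∑ i ∈ Finset.Icc m n, (f i).smulRight (x i))‖ < ε := by
  intro g ε hε
  set S : ℕ → X →L[ℝ] ℝ := fun n => ∑ i ∈ Finset.range n, g (x i) • f i with hS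
  have hc : CauchySeq S := (hshrink g).cauchySeq
  obtain ⟨M, hM⟩ := Metric.cauchySeq_iff.mp hc ε hε
  refine ⟨M, fun m n hm hmn => ?_⟩
  have key : g.comp (∑ i ∈ Finset.Icc m n, (f i).smulRight (x i)) = S (n + 1) - S m := by
    have h1 : g.comp (∑ i ∈ Finset.Icc m n, (f i).smulRight (x i))
        = ∑ i ∈ Finset.Icc m n, g (x i) • f i := by
      ext v
      simp [ContinuousLinearMap.sum_apply, mul_comm]
    rw [h1, hS]
    have h2 : Finset.Icc m n = Finset.Ico m (n + 1) := by
      rw [Finset.Ico_add_one_right_eq_Icc]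
    rw [h2, Finset.sum_Ico_eq_sub _ (by omega)]
  rw [key, ← dist_eq_norm]
  exact hM (n + 1) (by omega) m hm
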